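/- Let S_m = (Z₁,…,Z_m) be i.i.d. discrete random variables and let (H,K) be a random variable on a finite space that is a (possibly randomized) function of S_m. Then the mutual information satisfies I(Z_trn; (H,K)) ≤ I(S_m; (H,K))/m, where Z_trn is obtained by picking an index uniformly at random from {1,…,m} (independently of everything else) and outputting Z at that index. -/

import Mathlib

open scoped Classical BigOperators

/-- `μ` is a probability mass function on a finite type. -/
def IsPMF {Ω : Type*} [Fintype Ω] (μ : Ω → ℝ) : Prop :=
  (∀ ω, 0 ≤ μ ω) ∧ ∑ ω, μ ω = 1

/-- Probability that the random variable `X` takes the value `a` under `μ`. -/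
noncomputable def pr {Ω α : Type*} [Fintype Ω] (μ : Ω → ℝ) (X : Ω → α) (a : α) : ℝ :=
  ∑ ω, if X ω = a then μ ω else 0

/-- Variational information `J(X;Y)`: total variation distance between the joint
law of `(X,Y)` and the product of the marginal laws. -/
noncomputable def vinfo {Ω α β : Type*} [Fintype Ω] [Fintype α] [Fintype β]
    (μ : Ω → ℝ) (X : Ω → α) (Y : Ω → β) : ℝ :=
  (1/2) * ∑ a, ∑ b, |pr μ (fun ω => (X ω, Y ω)) (a, b) - pr μ X a * pr μ Y b|

/-- Conditional variational information `J(X;Y|W)`: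
`E_W[d_TV(P(X,Y|W), P(X|W)⊗P(Y|W))]`. -/
noncomputable def condVinfo {Ω α β γ : Type*} [Fintype Ω] [Fintype α] [Fintype β] [Fintype γ]
    (μ : Ω → ℝ) (X : Ω → α) (Y : Ω → β) (W : Ω → γ) : ℝ :=
  (1/2) * ∑ c, ∑ a, ∑ b,
    |pr μ (fun ω => (X ω, Y ω, W ω)) (a, b, c) -
      pr μ (fun ω => (X ω, W ω)) (a, c) * pr μ (fun ω => (Y ω, W ω)) (b, c) / pr μ W c|

/-- Shannon mutual information (in nats) between discrete random variables. -/
noncomputable def MI {Ω α β : Type*} [Fintype Ω] [Fintype α] [Fintype β]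
    (μ : Ω → ℝ) (X : Ω → α) (Y : Ω → β) : ℝ :=
  ∑ a, ∑ b, pr μ (fun ω => (X ω, Y ω)) (a, b) *
    Real.log (pr μ (fun ω => (X ω, Y ω)) (a, b) / (pr μ X a * pr μ Y b))

lemma pr_nonneg {Ω α : Type*} [Fintype Ω] {μ : Ω → ℝ} (hμ : ∀ ω, 0 ≤ μ ω) (X : Ω → α) (a : α) :
    0 ≤ pr μ X a :=
  Finset.sum_nonneg fun ω _ => by by_cases h : X ω = a <;> simp [h, hμ ω]

lemma pr_mono {Ω α β : Type*} [Fintype Ω] {μ : Ω → ℝ} (hμ : ∀ ω, 0 ≤ μ ω) {X : Ω → α} {Y : Ω → β}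
    {a : α} {b : β} (h : ∀ ω, X ω = a → Y ω = b) : pr μ X a ≤ pr μ Y b := by
  apply Finset.sum_le_sum
  intro ω _
  by_cases h1 : X ω = a
  · rw [if_pos h1, if_pos (h ω h1)]
  · rw [if_neg h1]
    split <;> [exact hμ ω; exact le_rfl]

lemma pr_sum {Ω α : Type*} [Fintype Ω] [Fintype α] (μ : Ω → ℝ) (X : Ω → α) :
    ∑ a, pr μ X a = ∑ ω, μ ω := by
  unfold pr
  rw [Finset.sum_comm]
  exact Finset.sum_congr rfl fun ω _ => by simp

lemma pr_map {Ω α β : Type*} [Fintype Ω] [Fintype α] (μ : Ω → ℝ) (X : Ω → α) (f : α → β) (b : β) :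
    pr μ (fun ω => f (X ω)) b = ∑ a, if f a = b then pr μ X a else 0 := by
  unfold pr
  have h1 : ∀ a : α, (if f a = b then ∑ ω, if X ω = a then μ ω else 0 else 0)
      = ∑ ω, if X ω = a ∧ f a = b then μ ω else 0 := by
    intro a
    split
    · next h => exact Finset.sum_congr rfl fun ω _ => by simp [h]
    · next h => exact (Finset.sum_eq_zero fun ω _ => by simp [h]).symm
  simp only [h1]
  rw [Finset.sum_comm]
  apply Finset.sum_congr rfl
  intro ω _
  rw [Finset.sum_eq_single (X ω)]
  · simp
  · intro a _ ha
    have : ¬ (X ω = a) := fun h => ha h.symm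
    simp [this]
  · intro h; exact absurd (Finset.mem_univ _) h

lemma pr_snd {Ω α β : Type*} [Fintype Ω] [Fintype α] (μ : Ω → ℝ) (X : Ω → α) (Y : Ω → β) (b : β) :
    ∑ a, pr μ (fun ω => (X ω, Y ω)) (a, b) = pr μ Y b := by
  unfold pr
  rw [Finset.sum_comm]
  apply Finset.sum_congr rfl
  intro ω _
  by_cases h : Y ω = b <;> simp [Prod.ext_iff, h]

lemma gibbs {ι : Type*} [Fintype ι] (p q : ι → ℝ) (hp : ∀ x, 0 ≤ p x) (hq : ∀ x, 0 ≤ q x)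
    (hsum : ∑ x, q x ≤ ∑ x, p x) (hac : ∀ x, 0 < p x → 0 < q x) :
    0 ≤ ∑ x, p x * Real.log (p x / q x) := by
  have key : ∀ x, p x * Real.log (q x / p x) ≤ q x - p x := by
    intro x
    rcases eq_or_lt_of_le (hp x) with h | h
    · simp [← h, hq x]
    · have hqx := hac x h
      have hlog := Real.log_le_sub_one_of_pos (div_pos hqx h)
      calc p x * Real.log (q x / p x) ≤ p x * (q x / p x - 1) :=
            mul_le_mul_of_nonneg_left hlog (le_of_lt h)
        _ = q x - p x := by field_simp
  have h2 : ∑ x, p x * Real.log (q x / p x) ≤ 0 := by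
    calc ∑ x, p x * Real.log (q x / p x) ≤ ∑ x, (q x - p x) :=
          Finset.sum_le_sum fun x _ => key x
      _ ≤ 0 := by rw [Finset.sum_sub_distrib]; linarith
  have h3 : ∀ x, p x * Real.log (p x / q x) = -(p x * Real.log (q x / p x)) := by
    intro x
    rw [← inv_div, Real.log_inv]
    ring
  simp only [h3]
  rw [Finset.sum_neg_distrib]
  linarith

section Main

variable {Ω 𝒵 𝒦 : Type*} [Fintype Ω] [Fintype 𝒵] [Fintype 𝒦]
    (m : ℕ) (hm : 0 < m) (μ : Ω → ℝ)
    (Zs : Ω → Fin m → 𝒵) (q : 𝒵 → ℝ)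
    (HK : Ω → 𝒦)

-- marginal of coordinate i is q
lemma coord_marginal (hq1 : ∑ a, q a = 1)
    (hiid : ∀ z : Fin m → 𝒵, pr μ Zs z = ∏ i, q (z i)) (i : Fin m) (a : 𝒵) :
    pr μ (fun ω => Zs ω i) a = q a := by
  have h := pr_map μ Zs (fun z => z i) a
  simp only [hiid] at h
  rw [h]
  have hg : ∀ z : Fin m → 𝒵, (if z i = a then ∏ j, q (z j) else 0)
      = ∏ j, (if j = i then (if z j = a then q (z j) else 0) else q (z j)) := by
    intro z
    by_cases h : z i = a
    · rw [if_pos h]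
      exact Finset.prod_congr rfl fun j _ => by
        by_cases hj : j = i <;> simp [hj, h]
    · rw [if_neg h]
      exact (Finset.prod_eq_zero (Finset.mem_univ i) (by simp [h])).symm
  simp only [hg]
  rw [← Fintype.piFinset_univ, Finset.sum_prod_piFinset Finset.univ (fun j b => if j = i then (if b = a then q b else 0) else q b)]
  have hcol : ∀ j : Fin m, (∑ b, if j = i then (if b = a then q b else 0) else q b)
      = if j = i then q a else 1 := by
    intro j
    by_cases hj : j = i <;> simp [hj, hq1]
  simp only [hcol]
  simp
lemma pi_decomp (i : Fin m) (a : 𝒵) (k : 𝒦) :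
    pr μ (fun ω => (Zs ω i, HK ω)) (a, k)
      = ∑ z : Fin m → 𝒵, if z i = a then pr μ (fun ω => (Zs ω, HK ω)) (z, k) else 0 := by
  refine (pr_map μ (fun ω => (Zs ω, HK ω)) (fun p => (p.1 i, p.2)) (a, k)).trans ?_
  rw [Fintype.sum_prod_type]
  refine Finset.sum_congr rfl fun z _ => ?_
  by_cases hz : z i = a
  · simp [hz, Prod.ext_iff]
  · simp [hz, Prod.ext_iff]

end Main

set_option maxHeartbeats 2000000 in
lemma core {𝒵 𝒦 : Type*} [Fintype 𝒵] [Fintype 𝒦] (m : ℕ) (hm : 0 < m)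
    (P : (Fin m → 𝒵) → 𝒦 → ℝ) (Pi' : Fin m → 𝒵 → 𝒦 → ℝ) (Pk : 𝒦 → ℝ) (q : 𝒵 → ℝ)
    (hP0 : ∀ z k, 0 ≤ P z k)
    (hsum1 : ∑ z, ∑ k, P z k = 1)
    (hPk0 : ∀ k, 0 ≤ Pk k)
    (hPksum : ∑ k, Pk k = 1)
    (hPik : ∀ i k, ∑ a, Pi' i a k = Pk k)
    (hPidef : ∀ i a k, Pi' i a k = ∑ z, if z i = a then P z k else 0)
    (hle_k : ∀ z k, P z k ≤ Pk k)
    (hle_i : ∀ i z k, P z k ≤ Pi' i (z i) k)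
    (hle_q : ∀ i a k, Pi' i a k ≤ q a)
    (hPi0 : ∀ i a k, 0 ≤ Pi' i a k) :
    ∑ i, ∑ a, ∑ k, Pi' i a k * Real.log (Pi' i a k / (q a * Pk k))
      ≤ ∑ z, ∑ k, P z k * Real.log (P z k / ((∏ i, q (z i)) * Pk k)) := by
  -- Step 1 : rewrite each marginal MI as a sum over full z
  have L1 : ∀ i : Fin m, (∑ a, ∑ k, Pi' i a k * Real.log (Pi' i a k / (q a * Pk k)))
      = ∑ z, ∑ k, P z k * Real.log (Pi' i (z i) k / (q (z i) * Pk k)) := by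
    intro i
    have hk : ∀ k : 𝒦, ∑ a, Pi' i a k * Real.log (Pi' i a k / (q a * Pk k))
        = ∑ z, P z k * Real.log (Pi' i (z i) k / (q (z i) * Pk k)) := by
      intro k
      have s1 : ∑ a, Pi' i a k * Real.log (Pi' i a k / (q a * Pk k))
          = ∑ a, ∑ z, (if z i = a then P z k * Real.log (Pi' i a k / (q a * Pk k)) else 0) := by
        refine Finset.sum_congr rfl fun a _ => ?_
        rw [hPidef i a k, Finset.sum_mul]
        exact Finset.sum_congr rfl fun z _ => by split <;> simp
      have s2 : ∑ z, ∑ a, (if z i = a then P z k * Real.log (Pi' i a k / (q a * Pk k)) else 0)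
          = ∑ z, P z k * Real.log (Pi' i (z i) k / (q (z i) * Pk k)) :=
        Finset.sum_congr rfl fun z _ => by simp
      rw [s1, Finset.sum_comm, s2]
    rw [Finset.sum_comm]
    rw [Finset.sum_congr rfl fun k (_ : k ∈ Finset.univ) => hk k]
    exact Finset.sum_comm
  -- Step 2 : pointwise log identity
  have key : ∀ z k, P z k * Real.log (P z k / ((∏ i, q (z i)) * Pk k))
      = P z k * (∑ i, Real.log (Pi' i (z i) k / (q (z i) * Pk k)))
        + P z k * Real.log (P z k / (Pk k * ∏ i, (Pi' i (z i) k / Pk k))) := by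
    intro z k
    rcases eq_or_lt_of_le (hP0 z k) with hz | hz
    · rw [← hz]; ring
    · have hPkpos : 0 < Pk k := lt_of_lt_of_le hz (hle_k z k)
      have hPipos : ∀ i : Fin m, 0 < Pi' i (z i) k := fun i => lt_of_lt_of_le hz (hle_i i z k)
      have hqpos : ∀ i : Fin m, 0 < q (z i) := fun i => lt_of_lt_of_le (hPipos i) (hle_q i (z i) k)
      have hPne : P z k ≠ 0 := hz.ne'
      have hPkne : Pk k ≠ 0 := hPkpos.ne'
      have hqne : ∀ i : Fin m, q (z i) ≠ 0 := fun i => (hqpos i).ne'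
      have hPine : ∀ i : Fin m, Pi' i (z i) k ≠ 0 := fun i => (hPipos i).ne'
      have hprodq : (∏ i, q (z i)) ≠ 0 := Finset.prod_ne_zero_iff.mpr fun i _ => hqne i
      have hproddiv : (∏ i, (Pi' i (z i) k / Pk k)) ≠ 0 :=
        Finset.prod_ne_zero_iff.mpr fun i _ => div_ne_zero (hPine i) hPkne
      have e1 : Real.log (P z k / ((∏ i, q (z i)) * Pk k))
          = Real.log (P z k) - ∑ i, Real.log (q (z i)) - Real.log (Pk k) := by
        rw [Real.log_div hPne (mul_ne_zero hprodq hPkne), Real.log_mul hprodq hPkne,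
            Real.log_prod (fun i _ => hqne i)]
        ring
      have e2 : ∀ i : Fin m, Real.log (Pi' i (z i) k / (q (z i) * Pk k))
          = Real.log (Pi' i (z i) k) - Real.log (q (z i)) - Real.log (Pk k) := fun i => by
        rw [Real.log_div (hPine i) (mul_ne_zero (hqne i) hPkne), Real.log_mul (hqne i) hPkne]
        ring
      have e3 : Real.log (P z k / (Pk k * ∏ i, (Pi' i (z i) k / Pk k)))
          = Real.log (P z k) - Real.log (Pk k)
            - ∑ i, (Real.log (Pi' i (z i) k) - Real.log (Pk k)) := by
        rw [Real.log_div hPne (mul_ne_zero hPkne hproddiv), Real.log_mul hPkne hproddiv,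
            Real.log_prod (fun i _ => div_ne_zero (hPine i) hPkne),
            Finset.sum_congr rfl (fun i (_ : i ∈ Finset.univ) => Real.log_div (hPine i) hPkne)]
        ring
      rw [e1, e3, Finset.sum_congr rfl fun i (_ : i ∈ Finset.univ) => e2 i]
      rw [Finset.sum_sub_distrib, Finset.sum_sub_distrib, Finset.sum_sub_distrib,
          Finset.sum_const, Finset.card_univ, Fintype.card_fin, nsmul_eq_mul]
      ring
  -- Step 3 : Gibbs inequality for the correction term
  have hgibbs : 0 ≤ ∑ z, ∑ k, P z k * Real.log (P z k / (Pk k * ∏ i, (Pi' i (z i) k / Pk k))) := by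
    have hac : ∀ x : (Fin m → 𝒵) × 𝒦, 0 < P x.1 x.2 →
        0 < Pk x.2 * ∏ i, (Pi' i (x.1 i) x.2 / Pk x.2) := by
      intro x hx
      have hPkpos : 0 < Pk x.2 := lt_of_lt_of_le hx (hle_k x.1 x.2)
      exact mul_pos hPkpos (Finset.prod_pos fun i _ =>
        div_pos (lt_of_lt_of_le hx (hle_i i x.1 x.2)) hPkpos)
    have hQk : ∀ k, (∑ z : Fin m → 𝒵, Pk k * ∏ i, (Pi' i (z i) k / Pk k)) ≤ Pk k := by
      intro k
      by_cases hk : Pk k = 0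
      · simp [hk]
      · rw [← Finset.mul_sum]
        rw [← Fintype.piFinset_univ,
            Finset.sum_prod_piFinset Finset.univ (fun i a => Pi' i a k / Pk k)]
        have hone : ∀ i : Fin m, (∑ a, Pi' i a k / Pk k) = 1 := by
          intro i
          rw [← Finset.sum_div, hPik i k, div_self hk]
        rw [Finset.prod_congr rfl fun i _ => hone i]
        simp
    have hsum : ∑ x : (Fin m → 𝒵) × 𝒦, Pk x.2 * ∏ i, (Pi' i (x.1 i) x.2 / Pk x.2)
        ≤ ∑ x : (Fin m → 𝒵) × 𝒦, P x.1 x.2 := by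
      rw [Fintype.sum_prod_type, Fintype.sum_prod_type, hsum1]
      have c1 : ∑ z : Fin m → 𝒵, ∑ k, Pk k * ∏ i, (Pi' i (z i) k / Pk k)
          = ∑ k, ∑ z : Fin m → 𝒵, Pk k * ∏ i, (Pi' i (z i) k / Pk k) := Finset.sum_comm
      rw [c1]
      calc ∑ k, ∑ z : Fin m → 𝒵, Pk k * ∏ i, (Pi' i (z i) k / Pk k)
          ≤ ∑ k, Pk k := Finset.sum_le_sum fun k _ => hQk k
        _ = 1 := hPksum
    have h := gibbs (ι := (Fin m → 𝒵) × 𝒦) (fun x => P x.1 x.2)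
        (fun x => Pk x.2 * ∏ i, (Pi' i (x.1 i) x.2 / Pk x.2))
        (fun x => hP0 x.1 x.2)
        (fun x => mul_nonneg (hPk0 x.2)
          (Finset.prod_nonneg fun i _ => div_nonneg (hPi0 i (x.1 i) x.2) (hPk0 x.2)))
        hsum hac
    rw [Fintype.sum_prod_type] at h
    exact h
  -- Combine
  calc ∑ i, ∑ a, ∑ k, Pi' i a k * Real.log (Pi' i a k / (q a * Pk k))
      = ∑ i, ∑ z, ∑ k, P z k * Real.log (Pi' i (z i) k / (q (z i) * Pk k)) :=
        Finset.sum_congr rfl fun i _ => L1 i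
    _ = ∑ z, ∑ k, P z k * (∑ i, Real.log (Pi' i (z i) k / (q (z i) * Pk k))) := by
        rw [Finset.sum_comm]
        refine Finset.sum_congr rfl fun z _ => ?_
        rw [Finset.sum_comm]
        exact Finset.sum_congr rfl fun k _ => (Finset.mul_sum _ _ _).symm
    _ ≤ ∑ z, ∑ k, P z k * Real.log (P z k / ((∏ i, q (z i)) * Pk k)) := by
        have : ∑ z, ∑ k, P z k * Real.log (P z k / ((∏ i, q (z i)) * Pk k))
            = (∑ z, ∑ k, P z k * (∑ i, Real.log (Pi' i (z i) k / (q (z i) * Pk k))))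
              + ∑ z, ∑ k, P z k * Real.log (P z k / (Pk k * ∏ i, (Pi' i (z i) k / Pk k))) := by
          rw [← Finset.sum_add_distrib]
          refine Finset.sum_congr rfl fun z _ => ?_
          rw [← Finset.sum_add_distrib]
          exact Finset.sum_congr rfl fun k _ => key z k
        linarith

/-- If `Z₁,…,Z_m` are i.i.d. and `(H,K)` is any random variable on the same space
(e.g. a randomized function of the sample), then
`I(Z_trn;(H,K)) = (1/m) Σ_i I(Z_i;(H,K)) ≤ I(S_m;(H,K))/m`,
where `Z_trn` is the observation at a uniformly random index. -/
theorem mutual_info_single_le {Ω 𝒵 𝒦 : Type*} [Fintype Ω] [Fintype 𝒵] [Fintype 𝒦]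
    (m : ℕ) (hm : 0 < m) (μ : Ω → ℝ) (hμ : IsPMF μ)
    (Zs : Ω → Fin m → 𝒵) (q : 𝒵 → ℝ) (hq : IsPMF q)
    (hiid : ∀ z : Fin m → 𝒵, pr μ Zs z = ∏ i, q (z i))
    (HK : Ω → 𝒦) :
    (1 / (m : ℝ)) * ∑ i : Fin m, MI μ (fun ω => Zs ω i) HK ≤ MI μ Zs HK / m := by
  obtain ⟨hμ0, hμ1⟩ := hμ
  obtain ⟨hq0, hq1⟩ := hq
  have hcm : ∀ (i : Fin m) (a : 𝒵), pr μ (fun ω => Zs ω i) a = q a :=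
    fun i a => coord_marginal m μ Zs q hq1 hiid i a
  have hmain : ∑ i : Fin m, MI μ (fun ω => Zs ω i) HK ≤ MI μ Zs HK := by
    have h1 : ∀ i : Fin m, MI μ (fun ω => Zs ω i) HK
        = ∑ a, ∑ k, pr μ (fun ω => (Zs ω i, HK ω)) (a, k) *
            Real.log (pr μ (fun ω => (Zs ω i, HK ω)) (a, k) / (q a * pr μ HK k)) := by
      intro i
      unfold MI
      refine Finset.sum_congr rfl fun a _ => Finset.sum_congr rfl fun k _ => ?_
      rw [hcm i a]
    have h2 : MI μ Zs HK = ∑ z, ∑ k, pr μ (fun ω => (Zs ω, HK ω)) (z, k) *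
        Real.log (pr μ (fun ω => (Zs ω, HK ω)) (z, k) / ((∏ i, q (z i)) * pr μ HK k)) := by
      unfold MI
      refine Finset.sum_congr rfl fun z _ => Finset.sum_congr rfl fun k _ => ?_
      rw [hiid z]
    rw [h2, Finset.sum_congr rfl fun i (_ : i ∈ Finset.univ) => h1 i]
    refine core m hm (fun z k => pr μ (fun ω => (Zs ω, HK ω)) (z, k))
      (fun i a k => pr μ (fun ω => (Zs ω i, HK ω)) (a, k)) (fun k => pr μ HK k) q
      (fun z k => pr_nonneg hμ0 _ _)
      ?_
      (fun k => pr_nonneg hμ0 _ _)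
      (by rw [pr_sum]; exact hμ1)
      (fun i k => pr_snd μ (fun ω => Zs ω i) HK k)
      (fun i a k => pi_decomp m μ Zs HK i a k)
      (fun z k => pr_mono hμ0 fun ω h => congrArg Prod.snd h)
      (fun i z k => pr_mono hμ0 fun ω h => by
        rw [show Zs ω = z from congrArg Prod.fst h, show HK ω = k from congrArg Prod.snd h])
      (fun i a k => le_of_le_of_eq
        (pr_mono hμ0 fun ω h => congrArg Prod.fst h) (hcm i a))
      (fun i a k => pr_nonneg hμ0 _ _)
    rw [show (∑ z, ∑ k, pr μ (fun ω => (Zs ω, HK ω)) (z, k))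
        = ∑ p : (Fin m → 𝒵) × 𝒦, pr μ (fun ω => (Zs ω, HK ω)) p from
      (Fintype.sum_prod_type _).symm, pr_sum]
    exact hμ1
  have hm' : (0:ℝ) < m := by exact_mod_cast hm
  rw [show (1 / (m:ℝ)) * ∑ i : Fin m, MI μ (fun ω => Zs ω i) HK
      = (∑ i : Fin m, MI μ (fun ω => Zs ω i) HK) / m by ring]
  exact (div_le_div_iff_of_pos_right hm').mpr hmain
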